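/- arXiv:2405.06532 — 2 statements merged into one kernel-verified Lean document; each statement's English description precedes it below -/
import Mathlib

section
/- Let H be a real Hilbert space and g a bounded linear functional on H. Suppose H admits a family of subspaces V_0 and V_{j,i} (finitely or countably many) together with norms such that every w ∈ H can be decomposed as w = w_0 + ∑_{j,i} w_{j,i} with w_0 ∈ V_0, w_{j,i} ∈ V_{j,i}, and the splitting is stable: c ||w||^2 ≤ inf over decompositions of (||w_0||^2 + ∑_{j,i} ||w_{j,i}||^2) ≤ C ||w||^2 for constants 0 < c ≤ C. If each V_{j,i} is one-dimensional, spanned by a nonzero vector φ_{j,i}, and g_0 denotes the Riesz representation of g restricted to V_0, then c (||g_0||^2 + ∑_{j,i} ⟨g, φ_{j,i}⟩^2 / ||φ_{j,i}||^2) ≤ ||g||_{H^#}^2 ≤ C (||g_0||^2 + ∑_{j,i} ⟨g, φ_{j,i}⟩^2 / ||φ_{j,i}||^2). -/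
open scoped RealInnerProductSpace

/-- Abstract frame property: a stable splitting of a Hilbert space into a subspace `V0`
and one-dimensional spaces spanned by vectors `φ i` yields two-sided frame bounds for
the dual norm of any bounded linear functional. -/
theorem stmt4 {H : Type*} [NormedAddCommGroup H] [InnerProductSpace ℝ H] [CompleteSpace H]
    {ι : Type*} [Countable ι]
    (V0 : Submodule ℝ H) (φ : ι → H) (hφ : ∀ i, φ i ≠ 0)
    (c C : ℝ) (hc : 0 < c) (hcC : c ≤ C)
    (D : H → Set ℝ)
    (hD : ∀ w, D w = {S : ℝ | ∃ (w0 : H) (a : ι → ℝ),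
      w0 ∈ V0 ∧ HasSum (fun i => a i • φ i) (w - w0) ∧
      Summable (fun i => ‖a i • φ i‖ ^ 2) ∧
      S = ‖w0‖ ^ 2 + ∑' i, ‖a i • φ i‖ ^ 2})
    (hnonempty : ∀ w, (D w).Nonempty)
    (hstab : ∀ w, c * ‖w‖ ^ 2 ≤ sInf (D w) ∧ sInf (D w) ≤ C * ‖w‖ ^ 2)
    (g : H →L[ℝ] ℝ) (g0 : H) (hg0 : g0 ∈ V0)
    (hg0riesz : ∀ v ∈ V0, g v = ⟪g0, v⟫) :
    c * (‖g0‖ ^ 2 + ∑' i, (g (φ i)) ^ 2 / ‖φ i‖ ^ 2) ≤ ‖g‖ ^ 2 ∧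
    ‖g‖ ^ 2 ≤ C * (‖g0‖ ^ 2 + ∑' i, (g (φ i)) ^ 2 / ‖φ i‖ ^ 2) := by
  classical
  set t : ι → ℝ := fun i => (g (φ i)) ^ 2 / ‖φ i‖ ^ 2 with ht
  have hφn : ∀ i, (0:ℝ) < ‖φ i‖ := fun i => norm_pos_iff.mpr (hφ i)
  have htnn : ∀ i, 0 ≤ t i := fun i => div_nonneg (sq_nonneg _) (sq_nonneg _)
  have hDnn : ∀ w, ∀ S ∈ D w, 0 ≤ S := by
    intro w S hS
    rw [hD w] at hS
    obtain ⟨w0, a, _, _, hsum, rfl⟩ := hS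
    have : (0:ℝ) ≤ ∑' i, ‖a i • φ i‖ ^ 2 := tsum_nonneg fun i => sq_nonneg _
    positivity
  have hbdd : ∀ w, BddBelow (D w) := fun w => ⟨0, fun S hS => hDnn w S hS⟩
  -- Key lower-bound estimate via finite partial sums
  have key : ∀ F : Finset ι, c * (‖g0‖ ^ 2 + ∑ i ∈ F, t i) ≤ ‖g‖ ^ 2 := by
    intro F
    set a : ι → ℝ := fun i => if i ∈ F then g (φ i) / ‖φ i‖ ^ 2 else 0 with ha
    have haz : ∀ i ∉ F, a i • φ i = 0 := by intro i hi; simp [ha, hi]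
    have haz2 : ∀ i ∉ F, ‖a i • φ i‖ ^ 2 = 0 := by intro i hi; simp [haz i hi]
    set w : H := g0 + ∑ i ∈ F, a i • φ i with hw
    have hnorm : ∀ i ∈ F, ‖a i • φ i‖ ^ 2 = t i := by
      intro i hi
      have h := (hφn i).ne'
      simp only [ha, if_pos hi, norm_smul, Real.norm_eq_abs, mul_pow, sq_abs, ht, div_pow]
      field_simp
    set S : ℝ := ‖g0‖ ^ 2 + ∑ i ∈ F, t i with hSdef
    have hS : S ∈ D w := by
      rw [hD]
      refine ⟨g0, a, hg0, ?_, summable_of_ne_finset_zero haz2, ?_⟩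
      · have hws : w - g0 = ∑ i ∈ F, a i • φ i := by rw [hw]; abel
        rw [hws]
        exact hasSum_sum_of_ne_finset_zero haz
      · rw [tsum_eq_sum haz2, Finset.sum_congr rfl hnorm]
    have hgw : g w = S := by
      simp only [hw, map_add, map_sum, map_smul, smul_eq_mul]
      rw [hg0riesz g0 hg0, real_inner_self_eq_norm_sq, hSdef]
      congr 1
      refine Finset.sum_congr rfl fun i hi => ?_
      have h := (hφn i).ne'
      simp only [ha, if_pos hi, ht]
      field_simp
    have hS0 : 0 ≤ S := hDnn w S hS
    have h1 : c * ‖w‖ ^ 2 ≤ S := le_trans (hstab w).1 (csInf_le (hbdd w) hS)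
    have h2 : S ≤ ‖g‖ * ‖w‖ := by
      rw [← hgw]
      calc g w ≤ |g w| := le_abs_self _
        _ ≤ ‖g‖ * ‖w‖ := by simpa [Real.norm_eq_abs] using g.le_opNorm w
    have hgn : (0:ℝ) ≤ ‖g‖ := norm_nonneg g
    have hwn : (0:ℝ) ≤ ‖w‖ := norm_nonneg w
    have h4 : c * ‖w‖ ≤ ‖g‖ := by
      rcases eq_or_lt_of_le hwn with h | h
      · rw [← h]; simpa using hgn
      · have h3 : c * ‖w‖ ^ 2 ≤ ‖g‖ * ‖w‖ := h1.trans h2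
        have : (c * ‖w‖) * ‖w‖ ≤ ‖g‖ * ‖w‖ := by nlinarith
        exact le_of_mul_le_mul_right this h
    calc c * S ≤ c * (‖g‖ * ‖w‖) := by nlinarith
      _ = ‖g‖ * (c * ‖w‖) := by ring
      _ ≤ ‖g‖ * ‖g‖ := by nlinarith
      _ = ‖g‖ ^ 2 := by ring
  -- Summability of the frame coefficients
  have keyF : ∀ F : Finset ι, ∑ i ∈ F, t i ≤ ‖g‖ ^ 2 / c - ‖g0‖ ^ 2 := by
    intro F
    have h := key F
    rw [le_sub_iff_add_le, le_div_iff₀ hc]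
    nlinarith
  have hsummt : Summable t :=
    summable_of_sum_le (c := ‖g‖ ^ 2 / c - ‖g0‖ ^ 2) (fun i => htnn i) keyF
  have htsum_le : ∑' i, t i ≤ ‖g‖ ^ 2 / c - ‖g0‖ ^ 2 :=
    hsummt.tsum_le_of_sum_le keyF
  have hB0 : (0:ℝ) ≤ ∑' i, t i := tsum_nonneg fun i => htnn i
  set B : ℝ := ∑' i, t i with hB
  set G2 : ℝ := ‖g0‖ ^ 2 + B with hG2def
  have hG2 : (0:ℝ) ≤ G2 := by positivity
  constructor
  · -- lower bound
    have hle : G2 ≤ ‖g‖ ^ 2 / c := by rw [hG2def]; linarith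
    calc c * G2 ≤ c * (‖g‖ ^ 2 / c) := mul_le_mul_of_nonneg_left hle hc.le
      _ = ‖g‖ ^ 2 := by field_simp
  · -- upper bound
    have hup : ∀ w : H, (g w) ^ 2 ≤ C * G2 * ‖w‖ ^ 2 := by
      intro w
      have hDle : ∀ S ∈ D w, (g w) ^ 2 ≤ G2 * S := by
        intro S hS
        rw [hD] at hS
        obtain ⟨w0, a, hw0, hsum, hsq, rfl⟩ := hS
        set A : ℝ := ∑' i, ‖a i • φ i‖ ^ 2 with hA
        have hA0 : (0:ℝ) ≤ A := tsum_nonneg fun i => sq_nonneg _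
        have hgsum : HasSum (fun i => a i * g (φ i)) (g (w - w0)) := by
          have h := hsum.mapL g
          simpa [map_smul, smul_eq_mul] using h
        have hgw : g w = ⟪g0, w0⟫ + ∑' i, a i * g (φ i) := by
          have hw' : g w = g w0 + g (w - w0) := by
            rw [← map_add]; congr 1; abel
          rw [hw', hg0riesz w0 hw0, hgsum.tsum_eq]
        set u : ι → ℝ := fun i => |a i * g (φ i)| with hu
        have hueq : ∀ i, u i = (|a i| * ‖φ i‖) * (|g (φ i)| / ‖φ i‖) := by
          intro i
          have h := (hφn i).ne'
          rw [hu]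
          field_simp [abs_mul]
          rw [abs_mul]
        have husq1 : ∀ i, (|a i| * ‖φ i‖) ^ 2 = ‖a i • φ i‖ ^ 2 := by
          intro i; rw [norm_smul, Real.norm_eq_abs]
        have husq2 : ∀ i, (|g (φ i)| / ‖φ i‖) ^ 2 = t i := by
          intro i; rw [ht, div_pow, sq_abs]
        have hule : ∀ i, u i ≤ (‖a i • φ i‖ ^ 2 + t i) / 2 := by
          intro i
          rw [hueq i]
          nlinarith [sq_nonneg (|a i| * ‖φ i‖ - |g (φ i)| / ‖φ i‖), husq1 i, husq2 i]
        have hsummu : Summable u := by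
          refine Summable.of_nonneg_of_le (fun i => abs_nonneg _) hule ?_
          exact ((hsq.add hsummt).div_const 2)
        have hFu : ∀ F : Finset ι, ∑ i ∈ F, u i ≤ Real.sqrt A * Real.sqrt B := by
          intro F
          have hcs : (∑ i ∈ F, u i) ^ 2 ≤ (∑ i ∈ F, ‖a i • φ i‖ ^ 2) * (∑ i ∈ F, t i) := by
            have h := Finset.sum_mul_sq_le_sq_mul_sq F (fun i => |a i| * ‖φ i‖)
              (fun i => |g (φ i)| / ‖φ i‖)
            simpa only [← hueq, husq1, husq2] using h
          have h1 : ∑ i ∈ F, ‖a i • φ i‖ ^ 2 ≤ A :=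
            hsq.sum_le_tsum F (fun i _ => sq_nonneg _)
          have h2 : ∑ i ∈ F, t i ≤ B := hsummt.sum_le_tsum F (fun i _ => htnn i)
          have hFnn : (0:ℝ) ≤ ∑ i ∈ F, u i := Finset.sum_nonneg fun i _ => abs_nonneg _
          have hsum1 : (0:ℝ) ≤ ∑ i ∈ F, ‖a i • φ i‖ ^ 2 :=
            Finset.sum_nonneg fun i _ => sq_nonneg _
          have hsum2 : (0:ℝ) ≤ ∑ i ∈ F, t i := Finset.sum_nonneg fun i _ => htnn i
          have h3 : (∑ i ∈ F, u i) ^ 2 ≤ A * B := by nlinarith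
          have h4 : Real.sqrt ((∑ i ∈ F, u i) ^ 2) ≤ Real.sqrt (A * B) :=
            Real.sqrt_le_sqrt h3
          rwa [Real.sqrt_sq hFnn, Real.sqrt_mul hA0] at h4
        have htsumu : ∑' i, u i ≤ Real.sqrt A * Real.sqrt B :=
          hsummu.tsum_le_of_sum_le hFu
        have hsummu' : Summable fun i => ‖a i * g (φ i)‖ := by
          have h := hsummu
          rw [hu] at h
          simpa only [Real.norm_eq_abs] using h
        have habs : |∑' i, a i * g (φ i)| ≤ ∑' i, u i := by
          rw [hu]
          simpa only [Real.norm_eq_abs] using norm_tsum_le_tsum_norm hsummu'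
        have hgwabs : |g w| ≤ ‖g0‖ * ‖w0‖ + Real.sqrt A * Real.sqrt B := by
          rw [hgw]
          calc |⟪g0, w0⟫ + ∑' i, a i * g (φ i)|
              ≤ |⟪g0, w0⟫| + |∑' i, a i * g (φ i)| := abs_add_le _ _
            _ ≤ ‖g0‖ * ‖w0‖ + Real.sqrt A * Real.sqrt B := by
                gcongr
                · exact abs_real_inner_le_norm g0 w0
                · exact habs.trans htsumu
          
        have hsq1 : Real.sqrt A ^ 2 = A := Real.sq_sqrt hA0
        have hsq2 : Real.sqrt B ^ 2 = B := Real.sq_sqrt hB0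
        have hstep : (g w) ^ 2 ≤ (‖g0‖ * ‖w0‖ + Real.sqrt A * Real.sqrt B) ^ 2 := by
          rw [← sq_abs]
          exact pow_le_pow_left₀ (abs_nonneg _) hgwabs 2
        have hexpand : ∀ x y sa sb : ℝ, (x ^ 2 + sb ^ 2) * (y ^ 2 + sa ^ 2)
            - (x * y + sa * sb) ^ 2 = (x * sa - y * sb) ^ 2 := by
          intros; ring
        have h5 := hexpand ‖g0‖ ‖w0‖ (Real.sqrt A) (Real.sqrt B)
        rw [hsq1, hsq2] at h5
        calc (g w) ^ 2 ≤ (‖g0‖ * ‖w0‖ + Real.sqrt A * Real.sqrt B) ^ 2 := hstep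
          _ ≤ (‖g0‖ ^ 2 + B) * (‖w0‖ ^ 2 + A) := by
              have := sq_nonneg (‖g0‖ * Real.sqrt A - ‖w0‖ * Real.sqrt B)
              linarith [h5]
          _ = G2 * (‖w0‖ ^ 2 + A) := by rw [hG2def]
      have hinf : (g w) ^ 2 ≤ G2 * sInf (D w) := by
        rcases eq_or_lt_of_le hG2 with h | h
        · obtain ⟨S, hS⟩ := hnonempty w
          have := hDle S hS
          rw [← h] at this ⊢
          simpa using this
        · have hle : ∀ S ∈ D w, (g w) ^ 2 / G2 ≤ S := by
            intro S hS
            rw [div_le_iff₀ h]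
            have h2 := hDle S hS
            linarith [mul_comm G2 S]
          have h3 := le_csInf (hnonempty w) hle
          rw [div_le_iff₀ h] at h3
          linarith [mul_comm G2 (sInf (D w))]
      calc (g w) ^ 2 ≤ G2 * sInf (D w) := hinf
        _ ≤ G2 * (C * ‖w‖ ^ 2) := mul_le_mul_of_nonneg_left (hstab w).2 hG2
        _ = C * G2 * ‖w‖ ^ 2 := by ring
    have hCG : (0:ℝ) ≤ C * G2 := mul_nonneg (hc.trans_le hcC).le hG2
    have hbound : ∀ x : H, ‖g x‖ ≤ Real.sqrt (C * G2) * ‖x‖ := by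
      intro x
      rw [Real.norm_eq_abs, ← Real.sqrt_sq_eq_abs]
      calc Real.sqrt ((g x) ^ 2) ≤ Real.sqrt (C * G2 * ‖x‖ ^ 2) :=
            Real.sqrt_le_sqrt (hup x)
        _ = Real.sqrt (C * G2) * ‖x‖ := by
            rw [Real.sqrt_mul hCG, Real.sqrt_sq (norm_nonneg x)]
    have hgle : ‖g‖ ≤ Real.sqrt (C * G2) := g.opNorm_le_bound (Real.sqrt_nonneg _) hbound
    calc ‖g‖ ^ 2 ≤ Real.sqrt (C * G2) ^ 2 :=
          pow_le_pow_left₀ (norm_nonneg g) hgle 2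
      _ = C * G2 := Real.sq_sqrt hCG
end

section
/- Let V be a finite-dimensional real inner product space with inner product a(·,·), r ∈ V^# a linear functional, and V_0,...,V_J subspaces with V = V_J (the decomposition need not be direct). Define r_j ∈ V_j by the Riesz representations ⟨r, w_j⟩ = b_j(r_j, w_j) for all w_j ∈ V_j, where b_j are inner products on V_j, with b_0 = a restricted to V_0. Suppose the splitting is stable: for every w ∈ V, c_S a(w,w) ≤ inf_{w = ∑ w_j, w_j∈V_j} ∑_j b_j(w_j, w_j). Then ∑_{j=0}^J b_j(r_j, r_j) ≤ c_S^{-1} ||r||_{V^#,a}^2, where ||r||_{V^#,a} is the dual norm of r with respect to the a-norm. -/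
open scoped RealInnerProductSpace

/-- Abstract efficiency of the multilevel residual estimator: under the lower stability
bound of the splitting, the sum of the Riesz-represented residual norms is bounded by
`c_S⁻¹` times the squared dual norm of the residual. -/
theorem stmt8 {V : Type*} [NormedAddCommGroup V] [InnerProductSpace ℝ V]
    [FiniteDimensional ℝ V]
    (J : ℕ) (W : Fin (J + 1) → Submodule ℝ V) (hWJ : W (Fin.last J) = ⊤)
    (b : Fin (J + 1) → V → V → ℝ)
    (hsymm : ∀ j, ∀ u v, u ∈ W j → v ∈ W j → b j u v = b j v u)
    (hpos : ∀ j, ∀ u, u ∈ W j → 0 ≤ b j u u)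
    (hdef : ∀ j, ∀ u, u ∈ W j → b j u u = 0 → u = 0)
    (hb0 : ∀ u v, u ∈ W 0 → v ∈ W 0 → b 0 u v = ⟪u, v⟫)
    (r : V →L[ℝ] ℝ) (rj : Fin (J + 1) → V) (hrj : ∀ j, rj j ∈ W j)
    (hriesz : ∀ j, ∀ w ∈ W j, r w = b j (rj j) w)
    (cS : ℝ) (hcS : 0 < cS)
    (hstab : ∀ (w : V) (wj : Fin (J + 1) → V),
      (∀ j, wj j ∈ W j) → w = ∑ j, wj j →
      cS * ‖w‖ ^ 2 ≤ ∑ j, b j (wj j) (wj j)) :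
    ∑ j, b j (rj j) (rj j) ≤ cS⁻¹ * ‖r‖ ^ 2 := by
  set S := ∑ j, b j (rj j) (rj j) with hS
  set s := ∑ j, rj j with hs
  have hSr : S = r s := by
    rw [hs, map_sum]
    exact Finset.sum_congr rfl fun j _ => (hriesz j (rj j) (hrj j)).symm
  have hSnn : 0 ≤ S := Finset.sum_nonneg fun j _ => hpos j (rj j) (hrj j)
  have hstab' : cS * ‖s‖ ^ 2 ≤ S := hstab s rj hrj rfl
  have hcs : S ≤ ‖r‖ * ‖s‖ := by
    rw [hSr]
    calc r s ≤ |r s| := le_abs_self _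
    _ ≤ ‖r‖ * ‖s‖ := r.le_opNorm s
  rcases eq_or_lt_of_le hSnn with h0 | h0
  · exact h0 ▸ by positivity
  · have h1 : S * S ≤ ‖r‖ ^ 2 * ‖s‖ ^ 2 := by
      calc S * S ≤ (‖r‖ * ‖s‖) * (‖r‖ * ‖s‖) :=
            mul_le_mul hcs hcs hSnn (mul_nonneg (norm_nonneg _) (norm_nonneg _))
        _ = ‖r‖ ^ 2 * ‖s‖ ^ 2 := by ring
    have h2 : ‖s‖ ^ 2 ≤ S / cS := by
      rw [le_div_iff₀ hcS]; linarith [hstab']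
    have h3 : S * S ≤ ‖r‖ ^ 2 * (S / cS) :=
      h1.trans (mul_le_mul_of_nonneg_left h2 (by positivity))
    have heq : ‖r‖ ^ 2 * (S / cS) = (cS⁻¹ * ‖r‖ ^ 2) * S := by
      rw [div_eq_mul_inv]; ring
    have := le_of_mul_le_mul_right (heq ▸ h3) h0
    linarith
end
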